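/- arXiv:2501.17730 — 10 statements merged into one kernel-verified Lean document; each statement's English description precedes it below -/
import Mathlib

section
/- Let X be a finite-dimensional normed space over ℚ (with norm taking values in ℚ). If there exist linear functionals u₁*, ..., uₙ* : X → ℚ such that ‖x‖ = max{|uᵢ*(x)| : 1 ≤ i ≤ n} for all x ∈ X, then the pseudonorm on ℝ^d (where d = dim X, identifying X with ℚ^d) defined by the same formula using the ℝ-linear extensions of the uᵢ* is in fact a norm. -/
/-- If a rational-valued norm on `ℚ^d` is the max of absolute values of finitely many
ℚ-linear functionals, then the pseudonorm on `ℝ^d` defined by the same formula (via the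
ℝ-linear extensions of the functionals) is a norm, i.e., it is positive on nonzero vectors. -/
theorem rational_polyhedral_norm_real_extension_is_norm
    {d n : ℕ} (N : (Fin d → ℚ) → ℚ)
    (hpos : ∀ x : Fin d → ℚ, x ≠ 0 → 0 < N x)
    (u : Fin (n + 1) → ((Fin d → ℚ) →ₗ[ℚ] ℚ))
    (hN : ∀ x, N x = Finset.univ.sup' Finset.univ_nonempty (fun i => |u i x|)) :
    ∀ x : Fin d → ℝ, x ≠ 0 →
      0 < Finset.univ.sup' Finset.univ_nonempty
        (fun i : Fin (n + 1) => |∑ j, (u i (Pi.single j 1) : ℝ) * x j|) := by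
  -- the matrix of the functionals
  set M : Matrix (Fin (n + 1)) (Fin d) ℚ := Matrix.of fun i j => u i (Pi.single j 1) with hM
  -- u i x is given by the matrix
  have hui : ∀ (i : Fin (n + 1)) (x : Fin d → ℚ), u i x = M.mulVec x i := by
    intro i x
    rw [(u i).pi_apply_eq_sum_univ x]
    show _ = dotProduct _ _
    unfold dotProduct
    simp only [hM, Matrix.of_apply, smul_eq_mul]
    refine Finset.sum_congr rfl fun j _ => ?_
    have hps : (Pi.single j 1 : Fin d → ℚ) = fun k => if j = k then 1 else 0 :=
      funext fun k => by rw [Pi.single_apply]; exact if_congr eq_comm rfl rfl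
    rw [hps, mul_comm]
  -- mulVec M is injective over ℚ
  have hinj : LinearMap.ker M.mulVecLin = ⊥ := by
    rw [Matrix.ker_mulVecLin_eq_bot_iff]
    intro x hx
    by_contra hxne
    have h0 : 0 < N x := hpos x hxne
    rw [hN] at h0
    obtain ⟨i, -, hi⟩ := Finset.exists_mem_eq_sup' (Finset.univ_nonempty)
      (fun i : Fin (n + 1) => |u i x|)
    rw [hi, hui, hx] at h0
    simp at h0
  -- get a left inverse matrix B with B * M = 1
  obtain ⟨g, hg⟩ := M.mulVecLin.exists_leftInverse_of_injective hinj
  set B : Matrix (Fin d) (Fin (n + 1)) ℚ := LinearMap.toMatrix' g with hB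
  have hBM : B * M = 1 := by
    have h1 : LinearMap.toMatrix' (g.comp M.mulVecLin) =
        LinearMap.toMatrix' (LinearMap.id (R := ℚ) (M := Fin d → ℚ)) := by rw [hg]
    rw [LinearMap.toMatrix'_comp, LinearMap.toMatrix'_id, ← Matrix.toLin'_apply',
      LinearMap.toMatrix'_toLin'] at h1
    rw [hB, h1]
  -- pass to ℝ
  set f : ℚ →+* ℝ := Rat.castHom ℝ with hf
  have hBM' : (B.map f) * (M.map f) = 1 := by
    rw [← Matrix.map_mul, hBM, Matrix.map_one f (map_zero f) (map_one f)]
  intro x hx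
  -- the real matrix applied to x is nonzero somewhere
  have hMx : (M.map f).mulVec x ≠ 0 := by
    intro h0
    apply hx
    have : (B.map f).mulVec ((M.map f).mulVec x) = x := by
      rw [Matrix.mulVec_mulVec, hBM', Matrix.one_mulVec]
    rw [h0, Matrix.mulVec_zero] at this
    exact this.symm
  obtain ⟨i, hi⟩ := Function.ne_iff.mp hMx
  have hval : (M.map f).mulVec x i = ∑ j, (u i (Pi.single j 1) : ℝ) * x j := by
    simp [Matrix.mulVec, dotProduct, hM, hf]
  calc (0 : ℝ) < |∑ j, (u i (Pi.single j 1) : ℝ) * x j| := by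
        rw [← hval]; exact abs_pos.mpr hi
    _ ≤ _ := Finset.le_sup' (fun i : Fin (n + 1) => |∑ j, (u i (Pi.single j 1) : ℝ) * x j|) (Finset.mem_univ i)
end

section
/- Let x ∈ ℚ^d be a point in the convex hull (over ℝ) of points a₁, ..., aₘ ∈ ℚ^d. Then x can be expressed as a convex combination of a₁, ..., aₘ with rational coefficients. -/
/-- Solvability of a rational linear system over `ℝ` implies solvability over `ℚ`. -/
lemma rat_solution_of_real_solution {ι κ : Type*} [Fintype ι] [Fintype κ]
    (g : ι → (κ → ℚ)) (b : κ → ℚ) (u : ι → ℝ)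
    (hu : ∀ i, (b i : ℝ) = ∑ j, u j * (g j i : ℝ)) :
    ∃ v : ι → ℚ, ∀ i, b i = ∑ j, v j * g j i := by
  classical
  by_contra hcon
  push_neg at hcon
  have hb : b ∉ Submodule.span ℚ (Set.range g) := by
    intro hb
    rw [Submodule.mem_span_range_iff_exists_fun] at hb
    obtain ⟨v, hv⟩ := hb
    obtain ⟨i, hi⟩ := hcon v
    apply hi
    have := congrFun hv i
    simpa [Finset.sum_apply, mul_comm] using this.symm
  obtain ⟨f, hfb, hfmap⟩ :=
    (Submodule.span ℚ (Set.range g)).exists_dual_map_eq_bot_of_notMem hb inferInstance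
  have hfg : ∀ j, f (g j) = 0 := by
    intro j
    have : f (g j) ∈ (Submodule.span ℚ (Set.range g)).map f :=
      Submodule.mem_map_of_mem (Submodule.subset_span (Set.mem_range_self j))
    rw [hfmap] at this
    exact (Submodule.mem_bot _).mp this
  set c : κ → ℚ := fun i => f (fun j => if i = j then 1 else 0) with hc
  have hfx : ∀ y : κ → ℚ, f y = ∑ i, y i * c i := by
    intro y
    rw [LinearMap.pi_apply_eq_sum_univ f y]
    simp [hc, smul_eq_mul]
  have key : ((f b : ℚ) : ℝ) = 0 := by
    rw [hfx b]
    push_cast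
    calc (∑ i, (b i : ℝ) * (c i : ℝ))
        = ∑ i, (∑ j, u j * (g j i : ℝ)) * (c i : ℝ) := by
          refine Finset.sum_congr rfl fun i _ => by rw [hu i]
      _ = ∑ i, ∑ j, u j * ((g j i : ℝ) * (c i : ℝ)) := by
          refine Finset.sum_congr rfl fun i _ => by
            rw [Finset.sum_mul]
            exact Finset.sum_congr rfl fun j _ => by ring
      _ = ∑ j, u j * ∑ i, (g j i : ℝ) * (c i : ℝ) := by
          rw [Finset.sum_comm]
          exact Finset.sum_congr rfl fun j _ => (Finset.mul_sum _ _ _).symm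
      _ = 0 := by
          refine Finset.sum_eq_zero fun j _ => ?_
          have : (∑ i, g j i * c i : ℚ) = 0 := by rw [← hfx (g j), hfg j]
          have : ((∑ i, g j i * c i : ℚ) : ℝ) = 0 := by rw [this]; norm_num
          push_cast at this
          rw [this, mul_zero]
  exact hfb (by exact_mod_cast key)

/-- A rational point in the real convex hull of finitely many rational points is a
convex combination of them with rational coefficients. -/
theorem rational_point_in_real_convexHull_rational_coeffs
    {d m : ℕ} (a : Fin m → (Fin d → ℚ)) (x : Fin d → ℚ)
    (h : (fun j => (x j : ℝ)) ∈
      convexHull ℝ {p : Fin d → ℝ | ∃ k : Fin m, p = fun j => (a k j : ℝ)}) :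
    ∃ lam : Fin m → ℚ, (∀ k, 0 ≤ lam k) ∧ ∑ k, lam k = 1 ∧ ∑ k, lam k • a k = x := by
  obtain ⟨ι, hι, z, w, hrange, hai, hpos, hsum, hcomb⟩ :=
    eq_pos_convex_span_of_mem_convexHull h
  classical
  choose c hcc using fun i => hrange (Set.mem_range_self i)
  -- set up the rational linear system over index `Option (Fin d)`
  set g : ι → (Option (Fin d) → ℚ) := fun i => fun o => o.elim 1 (fun j => a (c i) j) with hg
  set b : Option (Fin d) → ℚ := fun o => o.elim 1 x with hbdef
  have hzj : ∀ i j, z i j = (a (c i) j : ℝ) := fun i j => by rw [hcc i]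
  have hu : ∀ o, (b o : ℝ) = ∑ i, w i * (g i o : ℝ) := by
    rintro (_ | j)
    · simpa [hbdef, hg] using hsum.symm
    · have := congrFun hcomb j
      simp only [Finset.sum_apply, Pi.smul_apply, smul_eq_mul] at this
      simp only [hbdef, hg, Option.elim]
      rw [← this]
      exact Finset.sum_congr rfl fun i _ => by rw [hzj i j]
  obtain ⟨v, hv⟩ := rat_solution_of_real_solution g b w hu
  have hvsum : ∑ i, v i = 1 := by
    have := hv none
    simpa [hbdef, hg] using this.symm
  have hvx : ∀ j, ∑ i, v i * a (c i) j = x j := by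
    intro j
    have := hv (some j)
    simpa [hbdef, hg] using this.symm
  -- the rational weights coincide with the real ones, hence are nonnegative
  have hveq : ∀ i, (v i : ℝ) = w i := by
    have hzero : ∀ i ∈ Finset.univ, ((v i : ℝ) - w i) = 0 := by
      apply affineIndependent_iff.mp hai Finset.univ (fun i => (v i : ℝ) - w i)
      · rw [Finset.sum_sub_distrib, hsum]
        have : ((∑ i, v i : ℚ) : ℝ) = 1 := by rw [hvsum]; norm_num
        push_cast at this
        rw [this, sub_self]
      · have h1 : ∑ i, (v i : ℝ) • z i = ∑ i, w i • z i := by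
          rw [hcomb]
          funext j
          simp only [Finset.sum_apply, Pi.smul_apply, smul_eq_mul]
          have : ((∑ i, v i * a (c i) j : ℚ) : ℝ) = (x j : ℝ) := by rw [hvx j]
          push_cast at this
          rw [← this]
          exact Finset.sum_congr rfl fun i _ => by rw [hzj i j]
        calc ∑ i, ((v i : ℝ) - w i) • z i
            = ∑ i, ((v i : ℝ) • z i - w i • z i) := by
              refine Finset.sum_congr rfl fun i _ => sub_smul _ _ _
          _ = ∑ i, (v i : ℝ) • z i - ∑ i, w i • z i := Finset.sum_sub_distrib _ _
          _ = 0 := by rw [h1, sub_self]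
    intro i
    have := hzero i (Finset.mem_univ i)
    linarith [this]
  have hvnn : ∀ i, 0 ≤ v i := by
    intro i
    have : (0 : ℝ) ≤ (v i : ℝ) := by rw [hveq i]; exact (hpos i).le
    exact_mod_cast this
  -- assemble the coefficients on `Fin m`
  refine ⟨fun k => ∑ i ∈ Finset.univ.filter (fun i => c i = k), v i, ?_, ?_, ?_⟩
  · intro k
    exact Finset.sum_nonneg fun i _ => hvnn i
  · rw [← hvsum]
    exact (Finset.sum_fiberwise _ c v)
  · funext j
    simp only [Finset.sum_apply, Pi.smul_apply, smul_eq_mul]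
    rw [← hvx j]
    rw [← Finset.sum_fiberwise (Finset.univ) c (fun i => v i * a (c i) j)]
    refine Finset.sum_congr rfl fun k _ => ?_
    rw [Finset.sum_mul]
    refine Finset.sum_congr rfl fun i hi => ?_
    rw [(Finset.mem_filter.mp hi).2]
end

section
/- Let X be a finite-dimensional real normed space whose closed unit ball is the absolutely convex hull of finitely many points. If Y is a linear subspace of X, then the closed unit ball of Y (with the restricted norm) is also the absolutely convex hull of finitely many points of Y. -/
/-- Polyhedrality passes to subspaces: if the closed unit ball of a finite-dimensional real
normed space is the absolutely convex hull of a finite set, the same holds for the closed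
unit ball of any linear subspace. -/
theorem polyhedral_subspace
    {X : Type*} [NormedAddCommGroup X] [NormedSpace ℝ X] [FiniteDimensional ℝ X]
    (hX : ∃ F : Set X, F.Finite ∧ Metric.closedBall (0 : X) 1 = convexHull ℝ (F ∪ -F))
    (Y : Submodule ℝ X) :
    ∃ G : Set Y, G.Finite ∧ Metric.closedBall (0 : Y) 1 = convexHull ℝ (G ∪ -G) := by
  obtain ⟨F, hFfin, hball⟩ := hX
  have hAfin : (F ∪ -F).Finite := hFfin.union hFfin.neg
  set A : Finset X := hAfin.toFinset with hAdef
  have hAcoe : (A : Set X) = F ∪ -F := hAfin.coe_toFinset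
  set B : Set Y := Metric.closedBall (0 : Y) 1 with hBdef
  set G : Set Y := B.extremePoints ℝ with hGdef
  -- the representation predicate
  set P : Y → Finset X → Prop := fun x S =>
    S ⊆ A ∧ ∃ w : X → ℝ, (∀ a ∈ S, 0 < w a) ∧ ∑ a ∈ S, w a = 1 ∧
      ∑ a ∈ S, w a • a = (x : X) with hPdef
  -- every point of the unit ball of Y has a positive representation
  have hrep : ∀ x : Y, x ∈ B → ∃ S : Finset X, P x S := by
    intro x hx
    have hx1 : ‖(x : X)‖ ≤ 1 := by
      simpa [hBdef, mem_closedBall_zero_iff] using hx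
    have hxA : (x : X) ∈ convexHull ℝ (A : Set X) := by
      rw [hAcoe, ← hball]
      simpa [mem_closedBall_zero_iff] using hx1
    rw [Finset.convexHull_eq] at hxA
    obtain ⟨w, hw0, hw1, hwc⟩ := hxA
    refine ⟨A.filter (fun a => 0 < w a), Finset.filter_subset _ _, w,
      fun a ha => (Finset.mem_filter.1 ha).2, ?_, ?_⟩
    · rw [Finset.sum_filter_of_ne (fun a ha h => ?_)]
      · exact hw1
      · exact lt_of_le_of_ne (hw0 a ha) (Ne.symm h)
    · rw [Finset.sum_filter_of_ne (fun a ha h => ?_)]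
      · rw [← Finset.centerMass_eq_of_sum_1 _ _ hw1]; exact hwc
      · exact lt_of_le_of_ne (hw0 a ha) (Ne.symm fun h0 => h (by rw [h0, zero_smul]))
  -- injectivity : an extreme point is determined by its support
  have hinj : ∀ x ∈ G, ∀ x' ∈ G, ∀ S : Finset X, P x S → P x' S → x = x' := by
    intro x hx x' hx' S ⟨hSA, w, hw0, hw1, hwc⟩ ⟨_, w', hw'0, hw'1, hw'c⟩
    by_contra hne
    have hSne : S.Nonempty := by
      rcases S.eq_empty_or_nonempty with h | h
      · rw [h] at hw1; simp at hw1
      · exact h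
    set ε : ℝ := S.inf' hSne w with hεdef
    have hε : 0 < ε := by
      rw [hεdef, Finset.lt_inf'_iff]
      exact hw0
    have hεle : ∀ a ∈ S, ε ≤ w a := fun a ha => Finset.inf'_le _ ha
    have hw'le : ∀ a ∈ S, w' a ≤ 1 := by
      intro a ha
      rw [← hw'1]
      exact Finset.single_le_sum (fun b hb => (hw'0 b hb).le) ha
    -- the perturbed point
    set u : X → ℝ := fun a => (1 + ε) * w a - ε * w' a with hudef
    have hu0 : ∀ a ∈ S, 0 ≤ u a := by
      intro a ha
      have h1 : ε * w' a ≤ ε * 1 := by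
        exact mul_le_mul_of_nonneg_left (hw'le a ha) hε.le
      have h2 : ε ≤ w a := hεle a ha
      have h3 : w a ≤ (1 + ε) * w a := by nlinarith [hw0 a ha]
      simp only [hudef]
      nlinarith
    have hu1 : ∑ a ∈ S, u a = 1 := by
      simp only [hudef, Finset.sum_sub_distrib, ← Finset.mul_sum, hw1, hw'1]
      ring
    have hup : ∑ a ∈ S, u a • a = (1 + ε) • (x : X) - ε • (x' : X) := by
      simp only [hudef, sub_smul, mul_smul, Finset.sum_sub_distrib, ← Finset.smul_sum,
        hwc, hw'c]
    -- p lies in the unit ball of X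
    have hpX : (1 + ε) • (x : X) - ε • (x' : X) ∈ Metric.closedBall (0 : X) 1 := by
      rw [hball, ← hAcoe, ← hup]
      have := S.centerMass_mem_convexHull (w := u) (z := id) hu0 (by rw [hu1]; norm_num)
        (fun a ha => Finset.mem_coe.2 (hSA ha))
      rwa [Finset.centerMass_eq_of_sum_1 _ _ hu1] at this
    set p : Y := (1 + ε) • x - ε • x' with hpdef
    have hpcoe : (p : X) = (1 + ε) • (x : X) - ε • (x' : X) := by
      simp [hpdef]
    have hpB : p ∈ B := by
      have : ‖(p : X)‖ ≤ 1 := by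
        rw [hpcoe]
        simpa [mem_closedBall_zero_iff] using hpX
      simpa [hBdef, mem_closedBall_zero_iff, ← Submodule.norm_coe] using this
    -- x lies in the open segment from p to x'
    have hseg : (x : Y) ∈ openSegment ℝ p x' := by
      refine ⟨(1 + ε)⁻¹, ε / (1 + ε), by positivity, by positivity, ?_, ?_⟩
      · field_simp
      · rw [hpdef]
        have h1ε : (1 + ε) ≠ 0 := by positivity
        rw [smul_sub, smul_smul, smul_smul, inv_mul_cancel₀ h1ε, div_eq_mul_inv,
          mul_comm ε, ← smul_smul, one_smul]
        abel
    have hx'B : x' ∈ B := extremePoints_subset hx'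
    exact hne ((hx.2 hx'B hpB (by rwa [openSegment_symm])).symm)
  -- G is finite
  have hGfin : G.Finite := by
    classical
    set φ : Y → Finset X := fun x => if h : ∃ S, P x S then h.choose else ∅ with hφdef
    have hφP : ∀ x ∈ G, P x (φ x) := by
      intro x hx
      have h : ∃ S, P x S := hrep x (extremePoints_subset hx)
      simp only [hφdef, dif_pos h]
      exact h.choose_spec
    have himg : φ '' G ⊆ ↑A.powerset := by
      rintro _ ⟨x, hx, rfl⟩
      simpa [Finset.mem_powerset] using (hφP x hx).1
    refine Set.Finite.of_finite_image (A.powerset.finite_toSet.subset himg) ?_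
    intro x hx x' hx' hφeq
    exact hinj x hx x' hx' (φ x) (hφP x hx) (hφeq ▸ hφP x' hx')
  -- the ball equals the convex hull of its extreme points
  have hBcompact : IsCompact B := isCompact_closedBall (0 : Y) 1
  have hBconv : Convex ℝ B := convex_closedBall (0 : Y) 1
  have hBeq : B = convexHull ℝ G := by
    rw [← closure_convexHull_extremePoints hBcompact hBconv, ← hGdef,
      (Set.Finite.isClosed_convexHull (𝕜 := ℝ) hGfin).closure_eq]
  refine ⟨G, hGfin, ?_⟩
  apply Set.Subset.antisymm
  · rw [hBeq]
    exact convexHull_mono Set.subset_union_left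
  · refine convexHull_min (Set.union_subset ?_ ?_) (convex_closedBall _ _)
    · exact extremePoints_subset
    · intro y hy
      have : -y ∈ B := extremePoints_subset hy
      rw [hBdef, mem_closedBall_zero_iff] at this ⊢
      simpa using this
end

section
/- Let C = ℚ² with the norm ‖(x,y)‖ = |x| + |y|, let A = {(t,0) : t ∈ ℚ}, B = {(t,t) : t ∈ ℚ}, and f : A → B defined by f(t,0) = (t/2, t/2). Then there is no finite-dimensional normed space D over ℚ with polyhedral norm containing C isometrically, together with a surjective linear isometry g : D → D extending f. -/
/-- Failure of the 1-Hrushovski property for rational polyhedral spaces: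
for `C = ℚ²` with the ℓ¹-norm, `A = {(t,0)}`, `B = {(t,t)}` and the partial isometry
`f(t,0) = (t/2, t/2)`, there is no finite-dimensional rational polyhedral normed space `D`
containing `C` isometrically together with a surjective linear isometry `g` extending `f`. -/
theorem no_polyhedral_extension_of_partial_isometry
    {D : Type*} [NormedAddCommGroup D] [NormedSpace ℚ D] [FiniteDimensional ℚ D]
    (hpoly : ∃ (m : ℕ) (u : Fin (m + 1) → (D →ₗ[ℚ] ℚ)),
      ∀ x : D, ‖x‖ = ((Finset.univ.sup' Finset.univ_nonempty fun i => |u i x| : ℚ) : ℝ))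
    (ι : (ℚ × ℚ) →ₗ[ℚ] D)
    (hι : ∀ p : ℚ × ℚ, ‖ι p‖ = ((|p.1| + |p.2| : ℚ) : ℝ))
    (g : D →ₗ[ℚ] D) (hg_iso : ∀ x, ‖g x‖ = ‖x‖) (hg_surj : Function.Surjective g)
    (hg_ext : ∀ t : ℚ, g (ι (t, 0)) = ι (t / 2, t / 2)) :
    False := by
  obtain ⟨m, u, hu⟩ := hpoly
  set Q : D → ℚ := fun x => Finset.univ.sup' Finset.univ_nonempty fun i => |u i x| with hQdef
  have habs : ∀ (j : Fin (m + 1)) (x : D), |u j x| ≤ Q x := fun j x =>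
    Finset.le_sup' (fun i => |u i x|) (Finset.mem_univ j)
  have hQeq : ∀ (x : D) (c : ℚ), ‖x‖ = (c : ℝ) → Q x = c := by
    intro x c hc
    have : ((Q x : ℚ) : ℝ) = (c : ℝ) := by rw [← hu x, hc]
    exact_mod_cast this
  -- g is bijective
  have hginj : Function.Injective g := LinearMap.injective_iff_surjective.mpr hg_surj
  set E := LinearEquiv.ofBijective g ⟨hginj, hg_surj⟩ with hE
  have hEapp : ∀ x, E x = g x := fun x => rfl
  have hs_norm : ∀ x, ‖E.symm x‖ = ‖x‖ := by
    intro x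
    conv_rhs => rw [← E.apply_symm_apply x]
    rw [hEapp, hg_iso]
  -- the two backward orbits
  set y : ℕ → D := fun k => (fun w => E.symm w)^[k] (ι (1, 0)) with hy
  set z : ℕ → D := fun k => (fun w => E.symm w)^[k] (ι (0, 1)) with hz
  have hy0 : y 0 = ι (1, 0) := rfl
  have hz0 : z 0 = ι (0, 1) := rfl
  have hysucc : ∀ k, y (k + 1) = E.symm (y k) := by
    intro k; simp only [hy]; rw [Function.iterate_succ_apply']
  have hzsucc : ∀ k, z (k + 1) = E.symm (z k) := by
    intro k; simp only [hz]; rw [Function.iterate_succ_apply']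
  -- key recurrence
  have hbase : E.symm (ι (1, 0) + ι (0, 1)) = (2 : ℚ) • ι (1, 0) := by
    have h1 : g ((2 : ℚ) • ι (1, 0)) = ι (1, 0) + ι (0, 1) := by
      rw [map_smul, hg_ext 1, ← map_smul, ← map_add]
      norm_num
    have h2 : E ((2 : ℚ) • ι (1, 0)) = ι (1, 0) + ι (0, 1) := by rw [hEapp]; exact h1
    rw [← h2, E.symm_apply_apply]
  have hrec : ∀ k, y (k + 1) + z (k + 1) = (2 : ℚ) • y k := by
    intro k
    induction k with
    | zero => rw [hysucc, hzsucc, hy0, hz0, ← map_add]; exact hbase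
    | succ n ih =>
      rw [hysucc, hzsucc, ← map_add, ih, map_smul, ← hysucc]
  -- norms along the orbits
  have hyn : ∀ k, ‖y k‖ = (1 : ℝ) := by
    intro k
    induction k with
    | zero =>
      rw [hy0, hι]; norm_num
    | succ n ih => rw [hysucc, hs_norm]; exact ih
  have hzn : ∀ k, ‖z k‖ = (1 : ℝ) := by
    intro k
    induction k with
    | zero =>
      rw [hz0, hι]; norm_num
    | succ n ih => rw [hzsucc, hs_norm]; exact ih
  have hyzn : ∀ k, ‖y k - z k‖ = (2 : ℝ) := by
    intro k
    induction k with
    | zero =>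
      rw [hy0, hz0, ← map_sub, hι]; norm_num
    | succ n ih => rw [hysucc, hzsucc, ← map_sub, hs_norm]; exact ih
  have hQy : ∀ k, Q (y k) = 1 := fun k => hQeq _ 1 (by rw [hyn k]; norm_num)
  have hQz : ∀ k, Q (z k) = 1 := fun k => hQeq _ 1 (by rw [hzn k]; norm_num)
  have hQyz : ∀ k, Q (y k - z k) = 2 := fun k => hQeq _ 2 (by rw [hyzn k]; norm_num)
  -- attainment of the norm of y k - z k
  have hatt : ∀ k, ∃ i : Fin (m + 1), |u i (y k - z k)| = 2 := by
    intro k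
    obtain ⟨i, _, hi⟩ := Finset.exists_mem_eq_sup' (Finset.univ_nonempty)
      (fun i => |u i (y k - z k)|)
    exact ⟨i, by rw [← hi]; exact hQyz k⟩
  choose idx hidx using hatt
  -- main contradiction lemma
  have main : ∀ (k l : ℕ), k < l → ∀ v : D →ₗ[ℚ] ℚ, (∀ x, |v x| ≤ Q x) →
      v (y k - z k) = 2 → v (y l - z l) = 2 → False := by
    intro k l hkl v hv hk hl
    have hvy : ∀ n, |v (y n)| ≤ 1 := fun n => (hv (y n)).trans_eq (hQy n)
    have hvz : ∀ n, |v (z n)| ≤ 1 := fun n => (hv (z n)).trans_eq (hQz n)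
    have hvyk : v (y k) = 1 := by
      have hsub : v (y k) - v (z k) = 2 := by rw [← map_sub]; exact hk
      have h1 := abs_le.mp (hvy k)
      have h2 := abs_le.mp (hvz k)
      linarith
    have claim : ∀ d, v (y (k + d)) = 1 := by
      intro d
      induction d with
      | zero => exact hvyk
      | succ n ih =>
        have hr := congrArg v (hrec (k + n))
        rw [map_add, map_smul, ih] at hr
        have h1 := abs_le.mp (hvy (k + n + 1))
        have h2 := abs_le.mp (hvz (k + n + 1))
        have : v (y (k + n + 1)) + v (z (k + n + 1)) = 2 := by
          rw [hr]; norm_num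
        have := this
        rw [show k + (n + 1) = k + n + 1 from rfl]
        linarith
    obtain ⟨d, hd⟩ := Nat.exists_eq_add_of_lt hkl
    have hyd : v (y (k + d)) = 1 := claim d
    have hr := congrArg v (hrec (k + d))
    rw [map_add, map_smul, hyd] at hr
    have hsum : v (y l) + v (z l) = 2 := by rw [hd]; rw [hr]; norm_num
    have hdiff : v (y l) - v (z l) = 2 := by rw [← map_sub]; exact hl
    have h1 := abs_le.mp (hvy l)
    linarith
  -- pigeonhole
  set F : ℕ → Fin (m + 1) × Bool := fun k => (idx k, decide (u (idx k) (y k - z k) = 2)) with hF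
  obtain ⟨k, l, hne, heq⟩ := Finite.exists_ne_map_eq_of_infinite F
  have hidxeq : idx k = idx l := congrArg Prod.fst heq
  have hbooleq : (u (idx k) (y k - z k) = 2) ↔ (u (idx l) (y l - z l) = 2) := by
    have := congrArg Prod.snd heq
    simp only [hF] at this
    exact decide_eq_decide.mp this
  -- same value sign
  have hcase := abs_eq (by norm_num : (0:ℚ) ≤ 2) |>.mp (hidx k)
  -- build v
  have getfalse : ∀ (k l : ℕ), k < l → idx k = idx l →
      ((u (idx k) (y k - z k) = 2) ↔ (u (idx l) (y l - z l) = 2)) → False := by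
    intro k l hkl hie hbe
    rcases (abs_eq (by norm_num : (0:ℚ) ≤ 2)).mp (hidx k) with hpos | hneg
    · have hl2 : u (idx l) (y l - z l) = 2 := hbe.mp (by rw [← hie] at *; exact hpos)
      exact main k l hkl (u (idx k)) (habs (idx k)) hpos (by rw [hie]; exact hl2)
    · have hknot : ¬ (u (idx k) (y k - z k) = 2) := by rw [hneg]; norm_num
      have hlnot : ¬ (u (idx l) (y l - z l) = 2) := fun h => hknot (hbe.mpr h)
      have hlneg : u (idx l) (y l - z l) = -2 := by
        rcases (abs_eq (by norm_num : (0:ℚ) ≤ 2)).mp (hidx l) with h | h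
        · exact absurd h hlnot
        · exact h
      have hvabs : ∀ x, |(-(u (idx k))) x| ≤ Q x := by
        intro x
        simpa [abs_neg] using habs (idx k) x
      refine main k l hkl (-(u (idx k))) hvabs ?_ ?_
      · simp [hneg]
      · rw [hie]; simp [hlneg]
  rcases hne.lt_or_gt with h | h
  · exact getfalse k l h hidxeq hbooleq
  · exact getfalse l k h hidxeq.symm hbooleq.symm
end

section
/- Let D be a normed space, g : D → D a surjective linear isometry with g^n = id for some n ≥ 1, and let a₀, ..., a_{n-1} ∈ D satisfy ‖a₀ − g(a_{n-1})‖ = 1 and ‖a_{i+1} − g(a_i)‖ = 2^{-(i+1)} for 0 ≤ i ≤ n−2. Then 1 ≤ 1 − 2^{-(n-1)}, a contradiction; i.e., no such data exist. -/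
/-- The telescoping argument: there is no finite-order surjective linear isometry `g`
together with points `a₀, …, a_{n-1}` with `‖a₀ - g a_{n-1}‖ = 1` and
`‖a_{i+1} - g a_i‖ = 2^{-(i+1)}`. -/
theorem telescoping_contradiction
    {D : Type*} [NormedAddCommGroup D] [NormedSpace ℝ D]
    (g : D →ₗ[ℝ] D) (hg_iso : ∀ x, ‖g x‖ = ‖x‖) (hg_surj : Function.Surjective g)
    (n : ℕ) (hn : 1 ≤ n) (hgn : ∀ x, (⇑g)^[n] x = x)
    (a : ℕ → D)
    (h1 : ‖a 0 - g (a (n - 1))‖ = 1)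
    (h2 : ∀ i, i < n - 1 → ‖a (i + 1) - g (a i)‖ = (1 / 2 : ℝ) ^ (i + 1)) :
    False := by
  have hiter_sub : ∀ k (x y : D), (⇑g)^[k] (x - y) = (⇑g)^[k] x - (⇑g)^[k] y := by
    intro k
    induction k with
    | zero => simp
    | succ m ih =>
      intro x y
      simp [Function.iterate_succ_apply', ih x y, map_sub]
  have hiter_norm : ∀ k (x : D), ‖(⇑g)^[k] x‖ = ‖x‖ := by
    intro k
    induction k with
    | zero => simp
    | succ m ih =>
      intro x
      rw [Function.iterate_succ_apply', hg_iso, ih]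
  set f : ℕ → D := fun i => (⇑g)^[n - 1 - i] (a i) with hf
  have key : dist (f 0) (f (n - 1)) ≤
      ∑ i ∈ Finset.range (n - 1), dist (f i) (f (i + 1)) :=
    dist_le_range_sum_dist f (n - 1)
  have hL : dist (f 0) (f (n - 1)) = 1 := by
    have h0 : f 0 = (⇑g)^[n - 1] (a 0) := by simp [hf]
    have hnm : f (n - 1) = a (n - 1) := by simp [hf]
    rw [h0, hnm, dist_eq_norm]
    have : ‖(⇑g)^[n - 1] (a 0) - a (n - 1)‖ = ‖g ((⇑g)^[n - 1] (a 0) - a (n - 1))‖ :=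
      (hg_iso _).symm
    rw [this, map_sub]
    have : g ((⇑g)^[n - 1] (a 0)) = (⇑g)^[n] (a 0) := by
      rw [← Function.iterate_succ_apply' (⇑g), Nat.succ_eq_add_one, Nat.sub_add_cancel hn]
    rw [this, hgn, ← h1]
  have hterm : ∀ i ∈ Finset.range (n - 1), dist (f i) (f (i + 1)) = (1 / 2 : ℝ) ^ (i + 1) := by
    intro i hi
    rw [Finset.mem_range] at hi
    have hsub : n - 1 - i = (n - 1 - (i + 1)) + 1 := by omega
    rw [dist_eq_norm, hf]
    simp only
    rw [hsub, Function.iterate_succ_apply]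
    rw [← hiter_sub, hiter_norm, norm_sub_rev, h2 i hi]
  have hsum : ∑ i ∈ Finset.range (n - 1), dist (f i) (f (i + 1)) = 1 - (1 / 2 : ℝ) ^ (n - 1) := by
    rw [Finset.sum_congr rfl hterm]
    induction (n - 1) with
    | zero => simp
    | succ m ih => rw [Finset.sum_range_succ, ih]; ring
  have hpos : (0 : ℝ) < (1 / 2 : ℝ) ^ (n - 1) := by positivity
  rw [hL, hsum] at key
  linarith
end

section
/- Let E be a normed space, g : E → E a surjective linear isometry with g^n = id_E, and let A ⊆ E be a linear subspace with f := g restricted to A. Then for any a₀, ..., a_{n-1} ∈ A: ‖a₀ − f(a_{n-1})‖ ≤ Σ_{i=0}^{n-2} ‖a_{i+1} − f(a_i)‖. -/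
/-- If a partial isometry `f = g|_A` extends to a surjective linear isometry `g` of finite
order `n`, then the cyclic inequality
`‖a₀ - f(a_{n-1})‖ ≤ Σ_{i=0}^{n-2} ‖a_{i+1} - f(a_i)‖` holds for all `a₀, …, a_{n-1} ∈ A`. -/
theorem cyclic_inequality_of_finite_order_extension
    {E : Type*} [NormedAddCommGroup E] [NormedSpace ℝ E]
    (g : E →ₗ[ℝ] E) (hg_iso : ∀ x, ‖g x‖ = ‖x‖) (hg_surj : Function.Surjective g)
    (n : ℕ) (hn : 1 ≤ n) (hgn : ∀ x, (⇑g)^[n] x = x)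
    (A : Submodule ℝ E) (a : ℕ → E) (ha : ∀ i, a i ∈ A) :
    ‖a 0 - g (a (n - 1))‖ ≤ ∑ i ∈ Finset.range (n - 1), ‖a (i + 1) - g (a i)‖ := by
  have hsub : ∀ (k : ℕ) (x y : E), (⇑g)^[k] (x - y) = (⇑g)^[k] x - (⇑g)^[k] y := by
    intro k
    induction k with
    | zero => intro x y; simp
    | succ k ih =>
      intro x y
      simp [Function.iterate_succ_apply', ih, map_sub]
  have hnorm : ∀ (k : ℕ) (x : E), ‖(⇑g)^[k] x‖ = ‖x‖ := by
    intro k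
    induction k with
    | zero => intro x; simp
    | succ k ih =>
      intro x
      rw [Function.iterate_succ_apply', hg_iso, ih]
  set F : ℕ → E := fun i => (⇑g)^[n - i] (a i) with hF
  have h0 : F 0 = a 0 := by simp [hF, hgn]
  have h1 : F (n - 1) = g (a (n - 1)) := by
    have : n - (n - 1) = 1 := by omega
    simp [hF, this]
  calc ‖a 0 - g (a (n - 1))‖ = ‖∑ i ∈ Finset.range (n - 1), (F i - F (i + 1))‖ := by
        rw [Finset.sum_range_sub' F (n - 1), h0, h1]
    _ ≤ ∑ i ∈ Finset.range (n - 1), ‖F i - F (i + 1)‖ := norm_sum_le _ _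
    _ = ∑ i ∈ Finset.range (n - 1), ‖a (i + 1) - g (a i)‖ := by
        apply Finset.sum_congr rfl
        intro i hi
        have hi' : i < n - 1 := Finset.mem_range.mp hi
        have hk : n - i = (n - (i + 1)) + 1 := by omega
        have : F i - F (i + 1) = (⇑g)^[n - (i + 1)] (g (a i) - a (i + 1)) := by
          rw [hsub]
          simp only [hF]
          rw [hk, Function.iterate_succ_apply]
        rw [this, hnorm, norm_sub_rev]
end

section
/- Let C = ℚ² with norm ‖(x,y)‖ = |x|+|y|, A = {(t,0) : t ∈ ℚ}, and f(t,0) = (t/2, t/2). Then for every n ∈ ℕ, n ≥ 1, there exist a₀, ..., a_{n-1} ∈ A such that ‖a₀ − f(a_{n-1})‖ > Σ_{i=0}^{n-2} ‖a_{i+1} − f(a_i)‖. -/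
lemma geom_half_sum (m : ℕ) :
    ∑ i ∈ Finset.range m, ((1/2 : ℚ))^(i+1) = 1 - (1/2)^m := by
  induction m with
  | zero => simp
  | succ m ih => rw [Finset.sum_range_succ, ih]; ring

/-- The example of Theorem 4.4 violates the cyclic inequality for every `n ≥ 1`:
for `C = ℚ²` with the ℓ¹-norm and `f(t,0) = (t/2, t/2)` on `A = {(t,0)}`,
there are `a₀, …, a_{n-1} ∈ A` with
`‖a₀ - f(a_{n-1})‖ > Σ_{i=0}^{n-2} ‖a_{i+1} - f(a_i)‖`. -/
theorem example_violates_cyclic_inequality :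
    ∀ n : ℕ, 1 ≤ n →
      ∃ a : ℕ → ℚ × ℚ, (∀ i, (a i).2 = 0) ∧
        (let f : ℚ × ℚ → ℚ × ℚ := fun p => (p.1 / 2, p.1 / 2)
         let nrm : ℚ × ℚ → ℚ := fun p => |p.1| + |p.2|
         nrm (a 0 - f (a (n - 1))) >
           ∑ i ∈ Finset.range (n - 1), nrm (a (i + 1) - f (a i))) := by
  intro n hn
  refine ⟨fun i => (((1/2 : ℚ))^i, 0), fun i => rfl, ?_⟩
  simp only [Prod.fst_sub, Prod.snd_sub]
  have hpow : ∀ m : ℕ, (0:ℚ) < (1/2)^m := fun m => pow_pos (by norm_num) m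
  have habs : ∀ m : ℕ, |(0:ℚ) - (1/2:ℚ)^m / 2| = (1/2)^(m+1) := by
    intro m
    rw [abs_sub_comm, sub_zero, abs_of_pos (by positivity)]
    ring
  have hterm : ∀ i : ℕ,
      |((1/2:ℚ))^(i+1) - (1/2)^i / 2| + |(0:ℚ) - (1/2:ℚ)^i / 2| = (1/2)^(i+1) := by
    intro i
    rw [habs i]
    have : ((1/2:ℚ))^(i+1) - (1/2)^i / 2 = 0 := by ring
    rw [this, abs_zero, zero_add]
  calc ∑ i ∈ Finset.range (n-1),
        (|((1/2:ℚ))^(i+1) - (1/2)^i / 2| + |(0:ℚ) - (1/2:ℚ)^i / 2|)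
      = 1 - (1/2)^(n-1) := by
        rw [Finset.sum_congr rfl (fun i _ => hterm i), geom_half_sum]
    _ < 1 := by linarith [hpow (n-1)]
    _ ≤ |((1/2:ℚ))^0 - (1/2)^(n-1)/2| + |(0:ℚ) - (1/2:ℚ)^(n-1)/2| := by
        rw [habs (n-1)]
        have hm : n - 1 + 1 = n := Nat.succ_pred_eq_of_pos hn
        rw [hm]
        have h1 : ((1/2:ℚ))^0 - (1/2)^(n-1)/2 = 1 - (1/2)^n := by
          conv_rhs => rw [← hm]
          rw [pow_succ]; ring
        have h2 : ((1/2:ℚ))^n ≤ 1 := pow_le_one₀ (by norm_num) (by norm_num)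
        rw [h1, abs_of_nonneg (by linarith)]
        linarith
end

section
/- Let C be a normed space over a field 𝔽 ∈ {ℚ, ℝ}, A, B ⊆ C subspaces, and f : A → B a surjective linear isometry. Suppose there is n ∈ ℕ such that for all a₀, ..., a_{n-1} ∈ A: ‖a₀ − f(a_{n-1})‖ ≤ Σ_{i=0}^{n-2} ‖a_{i+1} − f(a_i)‖. Let E₀ = C^n with the norm ‖(c₀,...,c_{n-1})‖ = Σ‖cᵢ‖, let N ⊆ E₀ be the subspace generated by all vectors of the form (0,...,0,a,−f(a),0,...,0) (a at coordinate i, −f(a) at coordinate i+1, for 0 ≤ i ≤ n−2) and (−f(a),0,...,0,a) for a ∈ A, and let E = E₀/N with the quotient norm. Then the map c ↦ (c,0,...,0) + N is an isometric embedding of C into E. -/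
private lemma mod_prev_eq (n k : ℕ) (h : k < n) :
    (k + (n - 1)) % n = if k = 0 then n - 1 else k - 1 := by
  rcases Nat.eq_zero_or_pos k with rfl | hk
  · rw [if_pos rfl, Nat.zero_add, Nat.mod_eq_of_lt (by omega)]
  · have h2 : k + (n - 1) = (k - 1) + n := by omega
    rw [h2, Nat.add_mod_right, if_neg (by omega), Nat.mod_eq_of_lt (by omega)]

private lemma mod_next_eq (n k : ℕ) (h : k < n) :
    (k + 1) % n = if k + 1 = n then 0 else k + 1 := by
  split
  · rename_i h'; rw [h', Nat.mod_self]
  · rw [Nat.mod_eq_of_lt (by omega)]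

/-- (3) ⇒ (2) of Proposition 4.5, isometric-embedding part: given a partial isometry
`f : A → B` of `C` satisfying the cyclic inequality for some `n`, the canonical map
`c ↦ (c,0,…,0) + N` of `C` into the cyclic quotient `E = C^n/N` (with `C^n` carrying the
ℓ¹-norm and `E` the quotient norm) is isometric. -/
theorem cyclic_quotient_embedding_isometric
    {C : Type*} [NormedAddCommGroup C] [NormedSpace ℝ C]
    (A B : Submodule ℝ C) (f : A →ₗ[ℝ] B)
    (hf_iso : ∀ a : A, ‖(f a : C)‖ = ‖(a : C)‖) (hf_surj : Function.Surjective f)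
    (n : ℕ) (hn : 0 < n)
    (hineq : ∀ a : ℕ → A,
      ‖(a 0 : C) - ((f (a (n - 1)) : B) : C)‖ ≤
        ∑ i ∈ Finset.range (n - 1), ‖(a (i + 1) : C) - ((f (a i) : B) : C)‖)
    (N : Submodule ℝ (Fin n → C))
    (hN : N = Submodule.span ℝ {v : Fin n → C | ∃ (a : A) (i : Fin n),
      v = Pi.single i (a : C) -
          Pi.single (⟨(i.val + 1) % n, Nat.mod_lt _ hn⟩ : Fin n) ((f a : C))}) :
    ∀ c : C,
      sInf {r : ℝ | ∃ u ∈ N,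
        r = ∑ i, ‖((Pi.single (⟨0, hn⟩ : Fin n) c + u : Fin n → C)) i‖} = ‖c‖ := by
  intro c
  set i0 : Fin n := ⟨0, hn⟩ with hi0
  set prev : Fin n → Fin n := fun j => ⟨(j.val + (n - 1)) % n, Nat.mod_lt _ hn⟩ with hprev
  have hlink : ∀ i j : Fin n,
      ((⟨(i.val + 1) % n, Nat.mod_lt _ hn⟩ : Fin n) = j) ↔ prev j = i := by
    intro i j
    have hi := i.isLt; have hj := j.isLt
    simp only [hprev, Fin.ext_iff]
    rw [mod_prev_eq n j.val hj, mod_next_eq n i.val hi]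
    constructor <;> (intro h; split_ifs at h ⊢ <;> omega)
  set L : (Fin n → A) →ₗ[ℝ] (Fin n → C) :=
    { toFun := fun a j => ((a j : C) - ((f (a (prev j)) : B) : C))
      map_add' := by
        intro x y; funext j
        simp only [Pi.add_apply, map_add, Submodule.coe_add]
        abel
      map_smul' := by
        intro r x; funext j
        simp only [Pi.smul_apply, map_smul, SetLike.val_smul, RingHom.id_apply,
          smul_sub] } with hL
  have key : ∀ u ∈ N, ∃ a : Fin n → A, u = L a := by
    intro u hu
    rw [hN] at hu
    have hle : Submodule.span ℝ {v : Fin n → C | ∃ (a : A) (i : Fin n),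
        v = Pi.single i (a : C) -
            Pi.single (⟨(i.val + 1) % n, Nat.mod_lt _ hn⟩ : Fin n) ((f a : C))} ≤
        LinearMap.range L := by
      rw [Submodule.span_le]
      rintro v ⟨a₀, i, rfl⟩
      refine ⟨Pi.single i a₀, ?_⟩
      funext j
      have h3 : (j = (⟨(i.val + 1) % n, Nat.mod_lt _ hn⟩ : Fin n)) ↔ prev j = i :=
        eq_comm.trans (hlink i j)
      simp only [hL, LinearMap.coe_mk, AddHom.coe_mk, Pi.sub_apply, Pi.single_apply, h3]
      by_cases h1 : j = i <;> by_cases h2 : prev j = i <;>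
        simp [h1, h2, map_zero f] <;> split_ifs <;> simp [map_zero f]
    obtain ⟨a, ha⟩ := hle hu
    exact ⟨a, ha.symm⟩
  have lb : ∀ u ∈ N, ‖c‖ ≤ ∑ i, ‖((Pi.single i0 c + u : Fin n → C)) i‖ := by
    intro u hu
    obtain ⟨a, rfl⟩ := key u hu
    set a' : ℕ → A := fun k => a ⟨k % n, Nat.mod_lt _ hn⟩ with ha'
    set F : ℕ → ℝ :=
      fun k => ‖((Pi.single i0 c + L a : Fin n → C)) ⟨k % n, Nat.mod_lt _ hn⟩‖ with hF
    have hsum : ∑ i, ‖((Pi.single i0 c + L a : Fin n → C)) i‖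
        = ∑ k ∈ Finset.range n, F k := by
      rw [← Fin.sum_univ_eq_sum_range]
      apply Finset.sum_congr rfl
      intro j _
      congr 2
      simp [Fin.ext_iff, Nat.mod_eq_of_lt j.isLt]
    have hn' : n = (n - 1) + 1 := by omega
    have hsplit : ∑ k ∈ Finset.range n, F k
        = ∑ i ∈ Finset.range (n - 1), F (i + 1) + F 0 := by
      conv_lhs => rw [hn']
      rw [Finset.sum_range_succ']
    have hF0 : F 0 = ‖c + ((a' 0 : C) - ((f (a' (n - 1)) : B) : C))‖ := by
      have h0 : (⟨0 % n, Nat.mod_lt _ hn⟩ : Fin n) = i0 := by simp [Fin.ext_iff, hi0]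
      have hp : prev i0 = ⟨(n - 1) % n, Nat.mod_lt _ hn⟩ := by
        simp only [hprev, Fin.ext_iff, hi0, Nat.zero_add]
      simp only [hF]
      rw [h0]
      simp only [Pi.add_apply, Pi.single_eq_same, hL, LinearMap.coe_mk,
        AddHom.coe_mk, hp, ha']
      rw [h0]
    have hFi : ∀ i ∈ Finset.range (n - 1),
        F (i + 1) = ‖(a' (i + 1) : C) - ((f (a' i) : B) : C)‖ := by
      intro i hi
      rw [Finset.mem_range] at hi
      have hlt : i + 1 < n := by omega
      have hm : (i + 1) % n = i + 1 := Nat.mod_eq_of_lt hlt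
      have hne : (⟨(i + 1) % n, Nat.mod_lt _ hn⟩ : Fin n) ≠ i0 := by
        simp only [Ne, hi0, Fin.mk.injEq, hm]; omega
      have hp : prev ⟨(i + 1) % n, Nat.mod_lt _ hn⟩ = ⟨i % n, Nat.mod_lt _ hn⟩ := by
        simp only [hprev, Fin.ext_iff, hm]
        rw [mod_prev_eq n (i + 1) hlt, if_neg (by omega), Nat.mod_eq_of_lt (by omega)]
        omega
      simp only [hF, Pi.add_apply, Pi.single_apply, if_neg hne, zero_add, hL,
        LinearMap.coe_mk, AddHom.coe_mk, hp, ha']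
    have hd : ‖(a' 0 : C) - ((f (a' (n - 1)) : B) : C)‖
        ≤ ∑ i ∈ Finset.range (n - 1), F (i + 1) := by
      rw [Finset.sum_congr rfl hFi]
      exact hineq a'
    calc ‖c‖ = ‖(c + ((a' 0 : C) - ((f (a' (n-1)) : B) : C)))
                - ((a' 0 : C) - ((f (a' (n-1)) : B) : C))‖ := by
          rw [add_sub_cancel_right]
      _ ≤ ‖c + ((a' 0 : C) - ((f (a' (n-1)) : B) : C))‖
            + ‖(a' 0 : C) - ((f (a' (n-1)) : B) : C)‖ := norm_sub_le _ _
      _ ≤ F 0 + ∑ i ∈ Finset.range (n - 1), F (i + 1) := by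
            rw [hF0]; exact add_le_add_right hd _
      _ = ∑ k ∈ Finset.range n, F k := by rw [hsplit]; ring
      _ = ∑ i, ‖((Pi.single i0 c + L a : Fin n → C)) i‖ := hsum.symm
  have hmem : ‖c‖ ∈ {r : ℝ | ∃ u ∈ N,
      r = ∑ i, ‖((Pi.single i0 c + u : Fin n → C)) i‖} := by
    have hval : ∑ i, ‖((Pi.single i0 c + 0 : Fin n → C)) i‖ = ‖c‖ := by
      rw [add_zero]
      rw [Finset.sum_eq_single_of_mem (f := fun i => ‖(Pi.single i0 c : Fin n → C) i‖)
        i0 (Finset.mem_univ _) (by intro j _ hj; simp [Pi.single_apply, hj])]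
      simp
    exact ⟨0, N.zero_mem, hval.symm⟩
  apply le_antisymm
  · exact csInf_le ⟨‖c‖, by rintro r ⟨u, hu, rfl⟩; exact lb u hu⟩ hmem
  · exact le_csInf ⟨_, hmem⟩ (by rintro r ⟨u, hu, rfl⟩; exact lb u hu)
end

section
/- Let C₁ be a normed space, A₁, B₁ ⊆ C₁ subspaces, f₁ : A₁ → B₁ a surjective linear isometry. Let 𝔇 be the space of finitely supported functions α : ℤ → C₁ with norm ‖α‖ = Σ_k ‖α(k)‖, and let 𝔑 ⊆ 𝔇 be the subspace generated by vectors (…,0,−f₁(a),a,0,…) with a ∈ A₁ (where −f₁(a) is at coordinate k and a at coordinate k+1, any k). For integers k ≤ l, let 𝔇_{[k,l]} and 𝔑_{[k,l]} denote the elements of 𝔇 and 𝔑 supported in {k,...,l}. Then for every α ∈ 𝔇_{[k,l]}: inf{‖α + η‖ : η ∈ 𝔑} = inf{‖α + η‖ : η ∈ 𝔑_{[k,l]}}. -/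
set_option linter.unusedSectionVars false
set_option maxHeartbeats 1000000

section LocAux

section LocAux

variable {C : Type*} [NormedAddCommGroup C] [NormedSpace ℝ C]

/-- ℓ¹ norm of a finitely supported function. -/
noncomputable def loc_norm1 (ξ : ℤ →₀ C) : ℝ := ∑ m ∈ ξ.support, ‖ξ m‖

lemma loc_norm1_eq_sum (ξ : ℤ →₀ C) (s : Finset ℤ) (h : ξ.support ⊆ s) :
    loc_norm1 ξ = ∑ m ∈ s, ‖ξ m‖ := by
  refine Finset.sum_subset h (fun x _ hx => ?_)
  simp [Finsupp.notMem_support_iff.mp hx]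

/-- weight counting distance outside `[k,l]`. -/
def loc_w (k l m : ℤ) : ℕ := (m - l).toNat + (k - m).toNat

noncomputable def loc_meas (k l : ℤ) (ξ : ℤ →₀ C) : ℕ := ∑ m ∈ ξ.support, loc_w k l m

lemma loc_key_step (ξ ξ' : ℤ →₀ C) (m i : ℤ) (hne : i ≠ m) (hm0 : ξ' m = 0)
    (hi : ‖ξ' i‖ ≤ ‖ξ i‖ + ‖ξ m‖) (hoth : ∀ m', m' ≠ m → m' ≠ i → ξ' m' = ξ m') :
    loc_norm1 ξ' ≤ loc_norm1 ξ := by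
  set t : Finset ℤ := ((ξ.support ∪ ξ'.support).erase m).erase i with ht
  have hit : i ∉ insert m t := by
    simp only [Finset.mem_insert, ht]
    push_neg
    exact ⟨hne, Finset.notMem_erase _ _⟩
  have hmt : m ∉ t := by
    simp [ht, Finset.mem_erase]
  have hsub : ∀ ζ : ℤ →₀ C, ζ = ξ ∨ ζ = ξ' → ζ.support ⊆ insert i (insert m t) := by
    rintro ζ hζ m' hm'
    by_cases h1 : m' = i
    · simp [h1]
    by_cases h2 : m' = m
    · simp [h2]
    simp only [Finset.mem_insert, ht, Finset.mem_erase, Finset.mem_union]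
    rcases hζ with rfl | rfl
    · exact Or.inr (Or.inr ⟨h1, h2, Or.inl hm'⟩)
    · exact Or.inr (Or.inr ⟨h1, h2, Or.inr hm'⟩)
  rw [loc_norm1_eq_sum ξ _ (hsub ξ (Or.inl rfl)),
    loc_norm1_eq_sum ξ' _ (hsub ξ' (Or.inr rfl)),
    Finset.sum_insert hit, Finset.sum_insert hit,
    Finset.sum_insert hmt, Finset.sum_insert hmt]
  have hts : ∑ m' ∈ t, ‖ξ' m'‖ = ∑ m' ∈ t, ‖ξ m'‖ := by
    refine Finset.sum_congr rfl (fun x hx => ?_)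
    have h1 : x ≠ m := by rintro rfl; exact hmt hx
    have h2 : x ≠ i := by
      rintro rfl
      exact (Finset.notMem_erase _ _) hx
    rw [hoth x h1 h2]
  rw [hts, hm0]
  simp only [norm_zero]
  linarith

lemma loc_measure_step (k l : ℤ) (ξ ξ' : ℤ →₀ C) (m i : ℤ) (hm : m ∈ ξ.support)
    (hsub : ξ'.support ⊆ insert i (ξ.support.erase m)) (hw : loc_w k l i < loc_w k l m) :
    loc_meas k l ξ' < loc_meas k l ξ := by
  have h1 : loc_meas k l ξ' ≤ ∑ m' ∈ insert i (ξ.support.erase m), loc_w k l m' :=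
    Finset.sum_le_sum_of_subset hsub
  have h2 : ∑ m' ∈ insert i (ξ.support.erase m), loc_w k l m' ≤
      loc_w k l i + ∑ m' ∈ ξ.support.erase m, loc_w k l m' := by
    by_cases hi : i ∈ ξ.support.erase m
    · rw [Finset.insert_eq_self.mpr hi]; exact Nat.le_add_left _ _
    · rw [Finset.sum_insert hi]
  have h3 : loc_w k l m + ∑ m' ∈ ξ.support.erase m, loc_w k l m' = loc_meas k l ξ :=
    Finset.add_sum_erase _ _ hm
  omega

variable (A B : Submodule ℝ C) (f : A →ₗ[ℝ] B)

/-- the generator `(…,0,-f(a),a,0,…)` at position `j`, as a linear map in `a`. -/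
noncomputable def loc_g (j : ℤ) : A →ₗ[ℝ] (ℤ →₀ C) :=
  (Finsupp.lsingle (j + 1)).comp A.subtype - (Finsupp.lsingle j).comp (B.subtype.comp f)

lemma loc_g_apply (j : ℤ) (a : A) :
    loc_g A B f j a = Finsupp.single (j + 1) (a : C) - Finsupp.single j ((f a : C)) := rfl

/-- the "sum of generators" map. -/
noncomputable def loc_T : (ℤ →₀ A) →ₗ[ℝ] (ℤ →₀ C) := Finsupp.lsum ℝ (loc_g A B f)

lemma loc_T_single (j : ℤ) (a : A) :
    loc_T A B f (Finsupp.single j a) =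
      Finsupp.single (j + 1) (a : C) - Finsupp.single j ((f a : C)) := by
  rw [loc_T, Finsupp.lsum_single, loc_g_apply]

lemma loc_T_apply (b : ℤ →₀ A) (m : ℤ) :
    loc_T A B f b m = ((b (m - 1) : C)) - ((f (b m) : C)) := by
  classical
  rw [loc_T, Finsupp.lsum_apply, Finsupp.sum_apply]
  rw [Finsupp.sum]
  simp only [loc_g_apply, Finsupp.sub_apply, Finsupp.single_apply]
  rw [Finset.sum_sub_distrib]
  have e1 : ∀ j : ℤ, (j + 1 = m) = (j = m - 1) := by intro j; rw [eq_iff_iff]; omega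
  simp only [e1]
  have h1 : (∑ j ∈ b.support, if j = m - 1 then ((b j : C)) else 0) = ((b (m-1) : C)) := by
    rw [Finset.sum_ite_eq' b.support (m-1) (fun j => ((b j : C)))]
    by_cases h : m - 1 ∈ b.support
    · simp [h]
    · simp [h, Finsupp.notMem_support_iff.mp h]
  have h2 : (∑ j ∈ b.support, if j = m then ((f (b j) : C)) else 0) = ((f (b m) : C)) := by
    rw [Finset.sum_ite_eq' b.support m (fun j => ((f (b j) : C)))]
    by_cases h : m ∈ b.support
    · simp [h]
    · simp [h, Finsupp.notMem_support_iff.mp h]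
  rw [h1, h2]

lemma loc_range_T :
    LinearMap.range (loc_T A B f) = Submodule.span ℝ {v : ℤ →₀ C | ∃ (a : A) (k : ℤ),
      v = Finsupp.single (k + 1) (a : C) - Finsupp.single k ((f a : C))} := by
  apply le_antisymm
  · rintro x ⟨b, rfl⟩
    rw [loc_T, Finsupp.lsum_apply, Finsupp.sum]
    refine Submodule.sum_mem _ (fun j hj => Submodule.subset_span ⟨b j, j, ?_⟩)
    rw [loc_g_apply]
  · rw [Submodule.span_le]
    rintro v ⟨a, j, rfl⟩
    exact ⟨Finsupp.single j a, loc_T_single A B f j a⟩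

lemma loc_chain_top (hf_iso : ∀ a : A, ‖((f a : B) : C)‖ = ‖(a : C)‖)
    (b : ℤ →₀ A) (m : ℤ) (h : ∀ j, m ≤ j → ((b j : C)) = ((f (b (j + 1)) : C))) :
    b m = 0 := by
  have key : ∀ d : ℕ, ‖((b m : C))‖ = ‖((b (m + d) : C))‖ := by
    intro d
    induction d with
    | zero => simp
    | succ n ih =>
      rw [ih, h (m + n) (by omega)]
      rw [hf_iso]
      norm_num
      ring_nf
  set d : ℕ := b.support.sup (fun j => (j - m + 1).toNat) with hd
  have hbd : b (m + d) = 0 := by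
    by_contra hc
    have hmem : (m + (d:ℤ)) ∈ b.support := Finsupp.mem_support_iff.mpr hc
    have h2 := Finset.le_sup (f := fun j => (j - m + 1).toNat) hmem
    rw [← hd] at h2
    omega
  have : ‖((b m : C))‖ = 0 := by rw [key d, hbd]; simp
  have : ((b m : C)) = 0 := norm_eq_zero.mp this
  exact_mod_cast this

lemma loc_chain_bot (hf_iso : ∀ a : A, ‖((f a : B) : C)‖ = ‖(a : C)‖)
    (b : ℤ →₀ A) (m : ℤ) (h : ∀ j, j ≤ m → ((b (j - 1) : C)) = ((f (b j) : C))) :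
    b m = 0 := by
  have key : ∀ d : ℕ, ‖((b m : C))‖ = ‖((b (m - d) : C))‖ := by
    intro d
    induction d with
    | zero => simp
    | succ n ih =>
      have := h (m - n) (by omega)
      have hn : ‖((b (m - n - 1) : C))‖ = ‖((b (m - n) : C))‖ := by
        rw [this, hf_iso]
      rw [ih]
      have : (m - (↑(n+1) : ℤ)) = m - n - 1 := by push_cast; ring
      rw [this, hn]
  set d : ℕ := b.support.sup (fun j => (m - j).toNat) + 1 with hd
  have hbd : b (m - d) = 0 := by
    by_contra hc
    have hmem : (m - (d:ℤ)) ∈ b.support := Finsupp.mem_support_iff.mpr hc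
    have h2 := Finset.le_sup (f := fun j => (m - j).toNat) hmem
    omega
  have : ‖((b m : C))‖ = 0 := by rw [key d, hbd]; simp
  have : ((b m : C)) = 0 := norm_eq_zero.mp this
  exact_mod_cast this

lemma loc_shrink (hf_iso : ∀ a : A, ‖((f a : B) : C)‖ = ‖(a : C)‖)
    (k l : ℤ) (hkl : k ≤ l) (α : ℤ →₀ C)
    (hα : ∀ m, α m ≠ 0 → k ≤ m ∧ m ≤ l) :
    ∀ n : ℕ, ∀ b : ℤ →₀ A, loc_meas k l (α + loc_T A B f b) ≤ n →
      ∃ b', (∀ m, (α + loc_T A B f b') m ≠ 0 → k ≤ m ∧ m ≤ l) ∧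
        loc_norm1 (α + loc_T A B f b') ≤ loc_norm1 (α + loc_T A B f b) := by
  intro n
  induction n with
  | zero =>
    intro b hmeas
    refine ⟨b, fun m hm => ?_, le_refl _⟩
    have hmem : m ∈ (α + loc_T A B f b).support := Finsupp.mem_support_iff.mpr hm
    have h0 : loc_w k l m = 0 := by
      have := (Finset.sum_eq_zero_iff).mp (Nat.le_zero.mp hmeas) m hmem
      exact this
    unfold loc_w at h0
    omega
  | succ n IH =>
    intro b hmeas
    by_cases hgood : ∀ m, (α + loc_T A B f b) m ≠ 0 → k ≤ m ∧ m ≤ l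
    · exact ⟨b, hgood, le_refl _⟩
    set ξ := α + loc_T A B f b with hξdef
    have hξap : ∀ m', ξ m' = α m' + ((b (m' - 1) : C)) - ((f (b m') : C)) := by
      intro m'
      rw [hξdef, Finsupp.add_apply, loc_T_apply]
      abel
    push_neg at hgood
    obtain ⟨m₀, hm₀ne, hm₀out⟩ := hgood
    by_cases hplus : ∃ m' ∈ ξ.support, l < m'
    · -- shrink from the top
      set s : Finset ℤ := ξ.support.filter (fun m' => l < m') with hs
      have hsne : s.Nonempty := by
        obtain ⟨m', h1, h2⟩ := hplus
        exact ⟨m', Finset.mem_filter.mpr ⟨h1, h2⟩⟩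
      set m := s.max' hsne with hm
      have hmmem := Finset.mem_filter.mp (s.max'_mem hsne)
      obtain ⟨hmsupp, hml⟩ := hmmem
      have htop : ∀ m', m < m' → ξ m' = 0 := by
        intro m' h
        by_contra hc
        have hins : m' ∈ s := Finset.mem_filter.mpr ⟨Finsupp.mem_support_iff.mpr hc, by omega⟩
        have := s.le_max' m' hins
        omega
      have hα0 : ∀ m', l < m' → α m' = 0 := by
        intro m' h
        by_contra hc
        have := hα m' hc
        omega
      have hrel : ∀ j, m ≤ j → ((b j : C)) = ((f (b (j + 1)) : C)) := by
        intro j hj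
        have h0 := htop (j + 1) (by omega)
        rw [hξap, hα0 (j + 1) (by omega), zero_add] at h0
        have hjj : (j + 1 - 1 : ℤ) = j := by ring
        rw [hjj] at h0
        exact sub_eq_zero.mp h0
      have hbm0 : b m = 0 := loc_chain_top A B f hf_iso b m hrel
      set a := b (m - 1) with ha
      have hξm : ξ m = ((a : C)) := by
        rw [hξap m, hα0 m hml, hbm0]
        simp [ha]
      set b' := b - Finsupp.single (m - 1) a with hb'
      set ξ' := α + loc_T A B f b' with hξ'def
      have hmm1 : (m - 1 + 1 : ℤ) = m := by ring
      have hξ'ap : ∀ m', ξ' m' = ξ m' - Finsupp.single m ((a : C)) m'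
          + Finsupp.single (m - 1) ((f a : C)) m' := by
        intro m'
        rw [hξ'def, hb', map_sub, loc_T_single, hmm1, hξdef]
        simp only [Finsupp.add_apply, Finsupp.sub_apply]
        abel
      have hξ'm : ξ' m = 0 := by
        rw [hξ'ap, hξm, Finsupp.single_eq_same,
          Finsupp.single_eq_of_ne' (by omega : (m - 1 : ℤ) ≠ m)]
        abel
      have hξ'i : ξ' (m - 1) = ξ (m - 1) + ((f a : C)) := by
        rw [hξ'ap, Finsupp.single_eq_of_ne' (by omega : (m : ℤ) ≠ m - 1),
          Finsupp.single_eq_same]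
        abel
      have hoth : ∀ m', m' ≠ m → m' ≠ m - 1 → ξ' m' = ξ m' := by
        intro m' h1 h2
        rw [hξ'ap, Finsupp.single_eq_of_ne' (Ne.symm h1), Finsupp.single_eq_of_ne' (Ne.symm h2)]
        abel
      have hnorm : loc_norm1 ξ' ≤ loc_norm1 ξ := by
        refine loc_key_step ξ ξ' m (m - 1) (by omega) hξ'm ?_ hoth
        rw [hξ'i, hξm]
        calc ‖ξ (m - 1) + ((f a : C))‖ ≤ ‖ξ (m - 1)‖ + ‖((f a : C))‖ := norm_add_le _ _
          _ = ‖ξ (m - 1)‖ + ‖((a : C))‖ := by rw [hf_iso]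
      have hsub : ξ'.support ⊆ insert (m - 1) (ξ.support.erase m) := by
        intro m' hm'
        rcases eq_or_ne m' (m - 1) with rfl | h2
        · exact Finset.mem_insert_self _ _
        rcases eq_or_ne m' m with rfl | h1
        · exact absurd hξ'm (Finsupp.mem_support_iff.mp hm')
        refine Finset.mem_insert_of_mem (Finset.mem_erase.mpr ⟨h1, ?_⟩)
        rw [Finsupp.mem_support_iff, ← hoth m' h1 h2]
        exact Finsupp.mem_support_iff.mp hm'
      have hmeas' : loc_meas k l ξ' < loc_meas k l ξ :=
        loc_measure_step k l ξ ξ' m (m - 1) hmsupp hsub (by unfold loc_w; omega)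
      obtain ⟨b'', h1, h2⟩ := IH b' (by show loc_meas k l ξ' ≤ n; omega)
      exact ⟨b'', h1, le_trans h2 hnorm⟩
    · -- shrink from the bottom
      push_neg at hplus
      have hm₀k : m₀ < k := by
        have h1 : m₀ ∈ ξ.support := Finsupp.mem_support_iff.mpr hm₀ne
        have h2 := hplus m₀ h1
        omega
      set s : Finset ℤ := ξ.support.filter (fun m' => m' < k) with hs
      have hsne : s.Nonempty :=
        ⟨m₀, Finset.mem_filter.mpr ⟨Finsupp.mem_support_iff.mpr hm₀ne, hm₀k⟩⟩
      set m := s.min' hsne with hm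
      have hmmem := Finset.mem_filter.mp (s.min'_mem hsne)
      obtain ⟨hmsupp, hmk⟩ := hmmem
      have hbot : ∀ m', m' < m → ξ m' = 0 := by
        intro m' h
        by_contra hc
        have hins : m' ∈ s := Finset.mem_filter.mpr ⟨Finsupp.mem_support_iff.mpr hc, by omega⟩
        have := s.min'_le m' hins
        omega
      have hα0 : ∀ m', m' < k → α m' = 0 := by
        intro m' h
        by_contra hc
        have := hα m' hc
        omega
      have hrel : ∀ j, j ≤ m - 1 → ((b (j - 1) : C)) = ((f (b j) : C)) := by
        intro j hj
        have h0 := hbot j (by omega)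
        rw [hξap, hα0 j (by omega), zero_add] at h0
        exact sub_eq_zero.mp h0
      have hbm0 : b (m - 1) = 0 := loc_chain_bot A B f hf_iso b (m - 1) hrel
      set a := b m with ha
      have hξm : ξ m = -((f a : C)) := by
        rw [hξap m, hα0 m hmk, hbm0]
        simp [ha]
      set b' := b - Finsupp.single m a with hb'
      set ξ' := α + loc_T A B f b' with hξ'def
      have hξ'ap : ∀ m', ξ' m' = ξ m' - Finsupp.single (m + 1) ((a : C)) m'
          + Finsupp.single m ((f a : C)) m' := by
        intro m'
        rw [hξ'def, hb', map_sub, loc_T_single, hξdef]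
        simp only [Finsupp.add_apply, Finsupp.sub_apply]
        abel
      have hξ'm : ξ' m = 0 := by
        rw [hξ'ap, hξm, Finsupp.single_eq_same,
          Finsupp.single_eq_of_ne' (by omega : (m + 1 : ℤ) ≠ m)]
        abel
      have hξ'i : ξ' (m + 1) = ξ (m + 1) - ((a : C)) := by
        rw [hξ'ap, Finsupp.single_eq_of_ne' (by omega : (m : ℤ) ≠ m + 1),
          Finsupp.single_eq_same]
        abel
      have hoth : ∀ m', m' ≠ m → m' ≠ m + 1 → ξ' m' = ξ m' := by
        intro m' h1 h2
        rw [hξ'ap, Finsupp.single_eq_of_ne' (Ne.symm h2), Finsupp.single_eq_of_ne' (Ne.symm h1)]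
        abel
      have hnorm : loc_norm1 ξ' ≤ loc_norm1 ξ := by
        refine loc_key_step ξ ξ' m (m + 1) (by omega) hξ'm ?_ hoth
        rw [hξ'i, hξm]
        calc ‖ξ (m + 1) - ((a : C))‖ ≤ ‖ξ (m + 1)‖ + ‖((a : C))‖ := norm_sub_le _ _
          _ = ‖ξ (m + 1)‖ + ‖-((f a : C))‖ := by rw [norm_neg, hf_iso]
      have hsub : ξ'.support ⊆ insert (m + 1) (ξ.support.erase m) := by
        intro m' hm'
        rcases eq_or_ne m' (m + 1) with rfl | h2
        · exact Finset.mem_insert_self _ _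
        rcases eq_or_ne m' m with rfl | h1
        · exact absurd hξ'm (Finsupp.mem_support_iff.mp hm')
        refine Finset.mem_insert_of_mem (Finset.mem_erase.mpr ⟨h1, ?_⟩)
        rw [Finsupp.mem_support_iff, ← hoth m' h1 h2]
        exact Finsupp.mem_support_iff.mp hm'
      have hmeas' : loc_meas k l ξ' < loc_meas k l ξ :=
        loc_measure_step k l ξ ξ' m (m + 1) hmsupp hsub (by unfold loc_w; omega)
      obtain ⟨b'', h1, h2⟩ := IH b' (by show loc_meas k l ξ' ≤ n; omega)
      exact ⟨b'', h1, le_trans h2 hnorm⟩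

end LocAux

lemma loc_bddBelow (S : Set ℝ) (h : ∀ r ∈ S, (0:ℝ) ≤ r) : BddBelow S := ⟨0, h⟩

/-- Claim 5.2 (localization): in the ℤ-indexed ℓ¹-sum `𝔇` of copies of `C` with the
subspace `𝔑` generated by the vectors `(…,0,-f(a),a,0,…)`, the quotient norm of an element
supported in an interval `[k,l]` can be computed using only perturbations from `𝔑`
supported in `[k,l]`. -/
theorem localization_of_quotient_norm
    {C : Type*} [NormedAddCommGroup C] [NormedSpace ℝ C]
    (A B : Submodule ℝ C) (f : A →ₗ[ℝ] B)
    (hf_iso : ∀ a : A, ‖((f a : B) : C)‖ = ‖(a : C)‖) (hf_surj : Function.Surjective f)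
    (N : Submodule ℝ (ℤ →₀ C))
    (hN : N = Submodule.span ℝ {v : ℤ →₀ C | ∃ (a : A) (k : ℤ),
      v = Finsupp.single (k + 1) (a : C) - Finsupp.single k ((f a : C))}) :
    ∀ (k l : ℤ), k ≤ l → ∀ α : ℤ →₀ C, (∀ m : ℤ, α m ≠ 0 → k ≤ m ∧ m ≤ l) →
      sInf {r : ℝ | ∃ η ∈ N, r = ∑ m ∈ (α + η).support, ‖(α + η) m‖} =
      sInf {r : ℝ | ∃ η ∈ N, (∀ m : ℤ, η m ≠ 0 → k ≤ m ∧ m ≤ l) ∧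
        r = ∑ m ∈ (α + η).support, ‖(α + η) m‖} := by
  intro k l hkl α hα
  have hNT : N = LinearMap.range (loc_T A B f) := by rw [hN, loc_range_T]
  have hmem : ∀ η : ℤ →₀ C, η ∈ N ↔ ∃ b : ℤ →₀ A, loc_T A B f b = η := by
    intro η
    rw [hNT]
    exact ⟨fun ⟨b, hb⟩ => ⟨b, hb⟩, fun ⟨b, hb⟩ => ⟨b, hb⟩⟩
  set S₁ : Set ℝ := {r : ℝ | ∃ η ∈ N, r = ∑ m ∈ (α + η).support, ‖(α + η) m‖} with hS₁
  set S₂ : Set ℝ := {r : ℝ | ∃ η ∈ N, (∀ m : ℤ, η m ≠ 0 → k ≤ m ∧ m ≤ l) ∧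
      r = ∑ m ∈ (α + η).support, ‖(α + η) m‖} with hS₂
  have hbdd₁ : BddBelow S₁ := by
    refine loc_bddBelow _ ?_
    rintro r ⟨η, hη, rfl⟩
    exact Finset.sum_nonneg fun i _ => norm_nonneg _
  have hbdd₂ : BddBelow S₂ := by
    refine loc_bddBelow _ ?_
    rintro r ⟨η, hη, hsupp, rfl⟩
    exact Finset.sum_nonneg fun i _ => norm_nonneg _
  have hne₂ : S₂.Nonempty := ⟨_, 0, zero_mem N, by simp, rfl⟩
  have hne₁ : S₁.Nonempty := ⟨_, 0, zero_mem N, rfl⟩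
  apply le_antisymm
  · refine csInf_le_csInf hbdd₁ hne₂ ?_
    rintro r ⟨η, hη, _, hr⟩
    exact ⟨η, hη, hr⟩
  · refine le_csInf hne₁ ?_
    rintro r ⟨η, hη, rfl⟩
    obtain ⟨b, rfl⟩ := (hmem η).mp hη
    obtain ⟨b', hb'supp, hb'norm⟩ := loc_shrink A B f hf_iso k l hkl α hα
      (loc_meas k l (α + loc_T A B f b)) b (le_refl _)
    have hmem₂ : loc_norm1 (α + loc_T A B f b') ∈ S₂ := by
      refine ⟨loc_T A B f b', (hmem _).mpr ⟨b', rfl⟩, ?_, rfl⟩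
      intro m hm
      by_cases hαm : α m = 0
      · refine hb'supp m ?_
        rw [Finsupp.add_apply, hαm, zero_add]
        exact hm
      · exact hα m hαm
    exact le_trans (csInf_le hbdd₂ hmem₂) hb'norm
end LocAux
end

section
/- In the setting of Claim 5.2 (ℤ-indexed ℓ¹-sum 𝔇 of copies of C₁, subspace 𝔑, quotient 𝔠 = 𝔇/𝔑), the map j(c) = (…,0,c,0,…) + 𝔑 (with c at coordinate 0) is an isometric embedding of C₁ into 𝔠, and the shift-induced map F(α + 𝔑) = S(α) + 𝔑, where [S(α)](k) = α(k−1), is a well-defined surjective linear isometry of 𝔠 satisfying F(j(a)) = j(f₁(a)) for all a ∈ A₁. -/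
/-- Chain of norm-≤1 dual functionals intertwining `f`, extending a given `φ₀`. -/
private lemma exists_dual_chain {C : Type*} [NormedAddCommGroup C] [NormedSpace ℝ C]
    (A B : Submodule ℝ C) (f : A →ₗ[ℝ] B)
    (hf_iso : ∀ a : A, ‖((f a : B) : C)‖ = ‖(a : C)‖) (hf_surj : Function.Surjective f)
    (φ₀ : C →L[ℝ] ℝ) (hφ₀ : ‖φ₀‖ ≤ 1) :
    ∃ φ : ℤ → C →L[ℝ] ℝ, φ 0 = φ₀ ∧ (∀ k, ‖φ k‖ ≤ 1) ∧
      ∀ (k : ℤ) (a : A), φ (k + 1) (a : C) = φ k ((f a : B) : C) := by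
  have hf_inj : Function.Injective f := by
    intro a₁ a₂ h
    have h0 : ‖((a₁ - a₂ : A) : C)‖ = 0 := by
      rw [← hf_iso, map_sub, h]; simp
    have h1 : ((a₁ - a₂ : A) : C) = ((0 : A) : C) := by simpa using norm_eq_zero.mp h0
    have h2 : (a₁ - a₂ : A) = 0 := Subtype.coe_injective h1
    exact sub_eq_zero.mp h2
  set e : A ≃ₗ[ℝ] B := LinearEquiv.ofBijective f ⟨hf_inj, hf_surj⟩ with he
  have he_apply : ∀ a : A, e a = f a := fun a => rfl
  have step_fwd : ∀ g : C →L[ℝ] ℝ, ∃ g' : C →L[ℝ] ℝ,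
      ‖g‖ ≤ 1 → (‖g'‖ ≤ 1 ∧ ∀ a : A, g' (a : C) = g ((f a : B) : C)) := by
    intro g
    by_cases hg : ‖g‖ ≤ 1
    · set h : A →ₗ[ℝ] ℝ := g.toLinearMap ∘ₗ (B.subtype ∘ₗ f) with hh
      have hb : ∀ a : A, ‖h a‖ ≤ 1 * ‖a‖ := by
        intro a
        calc ‖h a‖ = ‖g ((f a : B) : C)‖ := rfl
          _ ≤ ‖g‖ * ‖((f a : B) : C)‖ := g.le_opNorm _
          _ = ‖g‖ * ‖(a : C)‖ := by rw [hf_iso]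
          _ ≤ 1 * ‖(a : C)‖ := by gcongr
          _ = 1 * ‖a‖ := rfl
      obtain ⟨g', hg'ext, hg'norm⟩ := exists_extension_norm_eq A (h.mkContinuous 1 hb)
      refine ⟨g', fun _ => ⟨?_, fun a => ?_⟩⟩
      · rw [hg'norm]; exact h.mkContinuous_norm_le zero_le_one hb
      · rw [hg'ext a]; rfl
    · exact ⟨0, fun h' => absurd h' hg⟩
  have step_bwd : ∀ g : C →L[ℝ] ℝ, ∃ g' : C →L[ℝ] ℝ,
      ‖g‖ ≤ 1 → (‖g'‖ ≤ 1 ∧ ∀ a : A, g' ((f a : B) : C) = g (a : C)) := by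
    intro g
    by_cases hg : ‖g‖ ≤ 1
    · set h : B →ₗ[ℝ] ℝ := g.toLinearMap ∘ₗ (A.subtype ∘ₗ (e.symm : B →ₗ[ℝ] A)) with hh
      have hb : ∀ b : B, ‖h b‖ ≤ 1 * ‖b‖ := by
        intro b
        have h1 : ((f (e.symm b) : B) : C) = (b : C) := by
          have : f (e.symm b) = b := by rw [← he_apply, e.apply_symm_apply]
          rw [this]
        calc ‖h b‖ = ‖g ((e.symm b : A) : C)‖ := rfl
          _ ≤ ‖g‖ * ‖((e.symm b : A) : C)‖ := g.le_opNorm _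
          _ = ‖g‖ * ‖(b : C)‖ := by rw [← hf_iso (e.symm b), h1]
          _ ≤ 1 * ‖(b : C)‖ := by gcongr
          _ = 1 * ‖b‖ := rfl
      obtain ⟨g', hg'ext, hg'norm⟩ := exists_extension_norm_eq B (h.mkContinuous 1 hb)
      refine ⟨g', fun _ => ⟨?_, fun a => ?_⟩⟩
      · rw [hg'norm]; exact h.mkContinuous_norm_le zero_le_one hb
      · rw [hg'ext (f a)]
        show h (f a) = g (a : C)
        have : e.symm (f a) = a := by rw [← he_apply, e.symm_apply_apply]
        show g ((e.symm (f a) : A) : C) = g (a : C)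
        rw [this]
    · exact ⟨0, fun h' => absurd h' hg⟩
  choose Fwd hFwd using step_fwd
  choose Bwd hBwd using step_bwd
  have hFn : ∀ n : ℕ, ‖Fwd^[n] φ₀‖ ≤ 1 := by
    intro n; induction n with
    | zero => simpa using hφ₀
    | succ n ih => rw [Function.iterate_succ_apply']; exact (hFwd _ ih).1
  have hBn : ∀ n : ℕ, ‖Bwd^[n] φ₀‖ ≤ 1 := by
    intro n; induction n with
    | zero => simpa using hφ₀
    | succ n ih => rw [Function.iterate_succ_apply']; exact (hBwd _ ih).1
  refine ⟨fun k => if 0 ≤ k then Fwd^[k.toNat] φ₀ else Bwd^[(-k).toNat] φ₀, by simp, ?_, ?_⟩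
  · intro k
    by_cases h : 0 ≤ k
    · simp only [if_pos h]; exact hFn _
    · simp only [if_neg h]; exact hBn _
  · intro k a
    rcases le_or_gt 0 k with hk | hk
    · have h1 : (0:ℤ) ≤ k + 1 := by omega
      have h2 : (k+1).toNat = k.toNat + 1 := by omega
      simp only [if_pos hk, if_pos h1, h2, Function.iterate_succ_apply']
      exact (hFwd _ (hFn _)).2 a
    · rcases lt_or_eq_of_le (show k + 1 ≤ 0 by omega) with h0 | h0
      · have h1 : ¬ (0:ℤ) ≤ k + 1 := by omega
        have h2 : ¬ (0:ℤ) ≤ k := by omega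
        have h3 : (-k).toNat = (-(k+1)).toNat + 1 := by omega
        simp only [if_neg h1, if_neg h2, h3, Function.iterate_succ_apply']
        exact ((hBwd _ (hBn _)).2 a).symm
      · have hk1 : k = -1 := by omega
        subst hk1
        have h1 : ((-1 : ℤ) + 1) = 0 := by norm_num
        have h2 : ¬ (0:ℤ) ≤ -1 := by norm_num
        have h3 : (-(-1 : ℤ)).toNat = 1 := by norm_num
        simp only [h1, if_pos (le_refl (0:ℤ)), if_neg h2, h3, Int.toNat_zero,
          Function.iterate_zero, Function.iterate_one, id_eq]
        exact ((hBwd _ (by simpa using hφ₀)).2 a).symm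

set_option maxHeartbeats 1000000

/-- In the ℤ-indexed ℓ¹-sum construction, `j(c) = (…,0,c,0,…) + 𝔑` is an isometric
embedding of `C` into the quotient `𝔠 = 𝔇/𝔑`, and the shift induces a well-defined
surjective linear isometry `F` of `𝔠` with `F(j(a)) = j(f(a))` for `a ∈ A`. -/
theorem shift_induces_isometry_on_quotient
    {C : Type*} [NormedAddCommGroup C] [NormedSpace ℝ C]
    (A B : Submodule ℝ C) (f : A →ₗ[ℝ] B)
    (hf_iso : ∀ a : A, ‖((f a : B) : C)‖ = ‖(a : C)‖) (hf_surj : Function.Surjective f)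
    (N : Submodule ℝ (ℤ →₀ C))
    (hN : N = Submodule.span ℝ {v : ℤ →₀ C | ∃ (a : A) (k : ℤ),
      v = Finsupp.single (k + 1) (a : C) - Finsupp.single k ((f a : C))}) :
    let S : (ℤ →₀ C) → (ℤ →₀ C) := Finsupp.mapDomain (fun k : ℤ => k + 1)
    let qn : (ℤ →₀ C) → ℝ :=
      fun α => sInf {r : ℝ | ∃ η ∈ N, r = ∑ m ∈ (α + η).support, ‖(α + η) m‖}
    (∀ c : C, qn (Finsupp.single 0 c) = ‖c‖) ∧
    (∀ η ∈ N, S η ∈ N) ∧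
    (∀ α, qn (S α) = qn α) ∧
    Function.Surjective S ∧
    (∀ a : A, S (Finsupp.single 0 (a : C)) - Finsupp.single 0 ((f a : C)) ∈ N) := by
  intro S qn
  simp only [S, qn]
  -- shifts preserve N
  have hmapN : ∀ t : ℤ, ∀ η ∈ N, Finsupp.mapDomain (fun k : ℤ => k + t) η ∈ N := by
    intro t
    have hle : N ≤ N.comap (Finsupp.lmapDomain C ℝ (fun k : ℤ => k + t)) := by
      conv_lhs => rw [hN]
      apply Submodule.span_le.mpr
      rintro v ⟨a, k, rfl⟩
      simp only [SetLike.mem_coe, Submodule.mem_comap, map_sub, Finsupp.lmapDomain_apply,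
        Finsupp.mapDomain_single]
      rw [hN]
      apply Submodule.subset_span
      exact ⟨a, k + t, by rw [show k + t + 1 = k + 1 + t from by ring]⟩
    intro η hη
    exact hle hη
  -- shift inverse
  have hSinv : ∀ β, S (Finsupp.mapDomain (fun k : ℤ => k + (-1)) β) = β := by
    intro β
    calc S (Finsupp.mapDomain (fun k : ℤ => k + (-1)) β)
        = Finsupp.mapDomain ((fun k : ℤ => k + 1) ∘ fun k : ℤ => k + (-1)) β :=
          Finsupp.mapDomain_comp.symm
      _ = Finsupp.mapDomain id β := by congr 1; funext k; simp
      _ = β := Finsupp.mapDomain_id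
  -- shifts preserve the ℓ¹ sum
  have hsum : ∀ (t : ℤ) (β : ℤ →₀ C),
      ∑ m ∈ (Finsupp.mapDomain (fun k : ℤ => k + t) β).support,
        ‖(Finsupp.mapDomain (fun k : ℤ => k + t) β) m‖ = ∑ m ∈ β.support, ‖β m‖ := by
    intro t β
    have hinj : Function.Injective (fun k : ℤ => k + t) := fun a b h => by
      simpa using congrArg (fun x => x - t) h
    exact Finsupp.sum_mapDomain_index_inj (h := fun _ v => ‖v‖) hinj
  refine ⟨?_, ?_, ?_, ?_, ?_⟩
  · -- j is isometric
    intro c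
    obtain ⟨φ₀, hφ₀n, hφ₀c⟩ : ∃ g : C →L[ℝ] ℝ, ‖g‖ ≤ 1 ∧ g c = ‖c‖ := by
      by_cases hc : c = 0
      · exact ⟨0, by simp, by simp [hc]⟩
      · obtain ⟨g, hg1, hg2⟩ := exists_dual_vector ℝ c (norm_ne_zero_iff.mpr hc)
        exact ⟨g, le_of_eq hg1, by exact_mod_cast hg2⟩
    obtain ⟨φ, hφ0, hφn, hφrel⟩ := exists_dual_chain A B f hf_iso hf_surj φ₀ hφ₀n
    set Φ : (ℤ →₀ C) →ₗ[ℝ] ℝ := Finsupp.lsum ℝ (fun k => (φ k).toLinearMap) with hΦ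
    have hΦsingle : ∀ (k : ℤ) (x : C), Φ (Finsupp.single k x) = φ k x := by
      intro k x; simp [hΦ]
    have hΦN : ∀ η ∈ N, Φ η = 0 := by
      have hle : N ≤ LinearMap.ker Φ := by
        rw [hN]; apply Submodule.span_le.mpr
        rintro v ⟨a, k, rfl⟩
        simp only [SetLike.mem_coe, LinearMap.mem_ker, map_sub, hΦsingle]
        rw [hφrel k a]; ring
      intro η hη; exact hle hη
    have hΦle : ∀ β : ℤ →₀ C, |Φ β| ≤ ∑ m ∈ β.support, ‖β m‖ := by
      intro β
      have h1 : Φ β = ∑ m ∈ β.support, φ m (β m) := by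
        simp [hΦ, Finsupp.lsum_apply, Finsupp.sum]
      rw [h1]
      calc |∑ m ∈ β.support, φ m (β m)| ≤ ∑ m ∈ β.support, |φ m (β m)| :=
            Finset.abs_sum_le_sum_abs _ _
        _ ≤ ∑ m ∈ β.support, ‖β m‖ := by
            apply Finset.sum_le_sum
            intro m _
            calc |φ m (β m)| ≤ ‖φ m‖ * ‖β m‖ := (φ m).le_opNorm _
              _ ≤ 1 * ‖β m‖ := by gcongr; exact hφn m
              _ = ‖β m‖ := one_mul _
    have hmem : ‖c‖ ∈ {r : ℝ | ∃ η ∈ N, r = ∑ m ∈ ((Finsupp.single 0 c + η : ℤ →₀ C)).support,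
        ‖(Finsupp.single 0 c + η : ℤ →₀ C) m‖} := by
      refine ⟨0, N.zero_mem, ?_⟩
      rw [add_zero]
      by_cases hc : c = 0
      · simp [hc]
      · rw [Finsupp.support_single_ne_zero _ hc]
        simp
    have hlb : ∀ r ∈ {r : ℝ | ∃ η ∈ N, r = ∑ m ∈ ((Finsupp.single 0 c + η : ℤ →₀ C)).support,
        ‖(Finsupp.single 0 c + η : ℤ →₀ C) m‖}, ‖c‖ ≤ r := by
      rintro r ⟨η, hη, rfl⟩
      have h1 : Φ (Finsupp.single 0 c + η) = ‖c‖ := by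
        rw [map_add, hΦsingle, hΦN η hη, add_zero, hφ0, hφ₀c]
      calc ‖c‖ = Φ (Finsupp.single 0 c + η) := h1.symm
        _ ≤ |Φ (Finsupp.single 0 c + η)| := le_abs_self _
        _ ≤ _ := hΦle _
    exact le_antisymm (csInf_le ⟨‖c‖, hlb⟩ hmem) (le_csInf ⟨_, hmem⟩ hlb)
  · -- S maps N into N
    intro η hη
    exact hmapN 1 η hη
  · -- S induces an isometry of the quotient
    intro α
    congr 1
    ext r
    constructor
    · rintro ⟨η, hη, rfl⟩
      refine ⟨Finsupp.mapDomain (fun k : ℤ => k + (-1)) η, hmapN (-1) η hη, ?_⟩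
      have h1 : S α + η = S (α + Finsupp.mapDomain (fun k : ℤ => k + (-1)) η) := by
        rw [show S (α + Finsupp.mapDomain (fun k : ℤ => k + (-1)) η)
          = S α + S (Finsupp.mapDomain (fun k : ℤ => k + (-1)) η) from Finsupp.mapDomain_add,
          hSinv]
      rw [h1]
      exact hsum 1 _
    · rintro ⟨η, hη, rfl⟩
      refine ⟨S η, hmapN 1 η hη, ?_⟩
      rw [show S α + S η = S (α + η) from Finsupp.mapDomain_add.symm]
      exact (hsum 1 _).symm
  · -- S is surjective
    intro β
    exact ⟨Finsupp.mapDomain (fun k : ℤ => k + (-1)) β, hSinv β⟩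
  · -- intertwining
    intro a
    rw [Finsupp.mapDomain_single, hN]
    exact Submodule.subset_span ⟨a, 0, rfl⟩
end
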